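/- Let 0 < x < 1, n ≥ 1, and let S_n = Z₁ + ... + Z_n be a sum of independent geometric random variables with P(Zᵢ ≥ k) = x^{ik}. Then for k ≥ 0, P(S_n = k) = x^k (1−xⁿ) ∏_{i=k+1}^{n+k−1} (1−xⁱ), and consequently P(S_n = k+1)/P(S_n = k) = x(1−x^{n+k})/(1−x^{k+1}). -/

import Mathlib

open MeasureTheory ProbabilityTheory

lemma key_alg (x : ℝ) (n : ℕ) (hn : 1 ≤ n) (k : ℕ) :
    ∑ j ∈ Finset.range (k + 1), x ^ (n * j) * (1 - x ^ n) *
        ∏ i ∈ Finset.Icc (k - j + 1) (n + k - j - 1), (1 - x ^ i)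
      = ∏ i ∈ Finset.Icc (k + 1) (n + k), (1 - x ^ i) := by
  induction k with
  | zero =>
    simp only [Finset.range_one, Finset.sum_singleton, Nat.mul_zero, pow_zero, one_mul,
      Nat.sub_zero, Nat.add_zero, Nat.zero_add]
    have hp : Finset.Icc 1 n = insert n (Finset.Icc 1 (n - 1)) := by
      ext a; simp only [Finset.mem_Icc, Finset.mem_insert]; omega
    rw [hp, Finset.prod_insert (by simp only [Finset.mem_Icc]; omega)]
  | succ k ih =>
    rw [Finset.sum_range_succ']
    have h1 : ∀ j ∈ Finset.range (k + 1),
        x ^ (n * (j + 1)) * (1 - x ^ n) *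
          ∏ i ∈ Finset.Icc (k + 1 - (j + 1) + 1) (n + (k + 1) - (j + 1) - 1), (1 - x ^ i)
        = x ^ n * (x ^ (n * j) * (1 - x ^ n) *
            ∏ i ∈ Finset.Icc (k - j + 1) (n + k - j - 1), (1 - x ^ i)) := by
      intro j hj
      rw [show k + 1 - (j + 1) + 1 = k - j + 1 by omega,
        show n + (k + 1) - (j + 1) - 1 = n + k - j - 1 by omega,
        show n * (j + 1) = n + n * j by ring, pow_add]
      ring
    rw [Finset.sum_congr rfl h1, ← Finset.mul_sum, ih]
    simp only [Nat.mul_zero, pow_zero, one_mul, Nat.sub_zero, Nat.add_zero]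
    rw [show k + 1 + 1 = k + 2 by omega, show n + (k + 1) - 1 = n + k by omega]
    have hins : Finset.Icc (k + 1) (n + k) = insert (k + 1) (Finset.Icc (k + 2) (n + k)) := by
      ext a; simp only [Finset.mem_Icc, Finset.mem_insert]; omega
    rw [hins, Finset.prod_insert (by simp), show n + (k + 1) = (n + k) + 1 by ring,
      Finset.prod_Icc_succ_top (by omega)]
    rw [show x ^ (n + k + 1) = x ^ n * x ^ (k + 1) by rw [← pow_add]; ring_nf]
    ring

lemma pmfZ {Ω : Type*} [MeasurableSpace Ω] (P : Measure Ω) [IsProbabilityMeasure P]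
    (x : ℝ) (hx0 : 0 < x)
    (Z : ℕ → Ω → ℕ) (hmeas : ∀ i, Measurable (Z i))
    (hgeom : ∀ i, 1 ≤ i → ∀ k : ℕ, P {ω | k ≤ Z i ω} = ENNReal.ofReal (x ^ (i * k)))
    (i : ℕ) (hi : 1 ≤ i) (j : ℕ) :
    P {ω | Z i ω = j} = ENNReal.ofReal (x ^ (i * j) * (1 - x ^ i)) := by
  have hset : {ω | Z i ω = j} = {ω | j ≤ Z i ω} \ {ω | j + 1 ≤ Z i ω} := by
    ext ω; simp only [Set.mem_setOf_eq, Set.mem_diff]; omega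
  have hsub : {ω | j + 1 ≤ Z i ω} ⊆ {ω | j ≤ Z i ω} := fun ω h => by
    simp only [Set.mem_setOf_eq] at *; omega
  have hm : MeasurableSet {ω | j + 1 ≤ Z i ω} := hmeas i (by measurability)
  rw [hset, measure_diff hsub hm.nullMeasurableSet (measure_ne_top P _), hgeom i hi,
    hgeom i hi, ← ENNReal.ofReal_sub _ (by positivity)]
  congr 1
  rw [show i * (j + 1) = i * j + i by ring, pow_add]
  ring

lemma pmfS {Ω : Type*} [MeasurableSpace Ω] (P : Measure Ω)
    [IsProbabilityMeasure P] (x : ℝ) (hx0 : 0 < x) (hx1 : x < 1)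
    (Z : ℕ → Ω → ℕ) (hmeas : ∀ i, Measurable (Z i))
    (hindep : iIndepFun Z P)
    (hgeom : ∀ i, 1 ≤ i → ∀ k : ℕ, P {ω | k ≤ Z i ω} = ENNReal.ofReal (x ^ (i * k)))
    (n : ℕ) (hn : 1 ≤ n) : ∀ k : ℕ,
    P {ω | ∑ i ∈ Finset.Icc 1 n, Z i ω = k}
        = ENNReal.ofReal (x ^ k * (1 - x ^ n)
            * ∏ i ∈ Finset.Icc (k + 1) (n + k - 1), (1 - x ^ i)) := by
  have hxle1 : ∀ m : ℕ, x ^ m ≤ 1 := fun m => pow_le_one₀ hx0.le hx1.le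
  have hfac : ∀ a b : ℕ, (0:ℝ) ≤ ∏ i ∈ Finset.Icc a b, (1 - x ^ i) := fun a b =>
    Finset.prod_nonneg fun i _ => by have := hxle1 i; linarith
  induction n, hn using Nat.le_induction with
  | base =>
    intro k
    simp only [Finset.Icc_self, Finset.sum_singleton]
    rw [pmfZ P x hx0 Z hmeas hgeom 1 le_rfl k,
      show (1:ℕ) + k - 1 = k by omega, Finset.Icc_eq_empty (by omega), Finset.prod_empty]
    congr 1
    ring
  | succ n hn ih =>
    intro k
    have hSmeas : Measurable (fun ω => ∑ i ∈ Finset.Icc 1 n, Z i ω) :=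
      Finset.measurable_sum _ fun i _ => hmeas i
    have hdecomp : {ω | ∑ i ∈ Finset.Icc 1 (n + 1), Z i ω = k}
        = ⋃ j ∈ Finset.range (k + 1),
            ({ω | ∑ i ∈ Finset.Icc 1 n, Z i ω = k - j} ∩ {ω | Z (n + 1) ω = j}) := by
      ext ω
      simp only [Set.mem_setOf_eq, Set.mem_iUnion, Set.mem_inter_iff, Finset.mem_range,
        Finset.sum_Icc_succ_top (show 1 ≤ n + 1 by omega)]
      constructor
      · intro h; exact ⟨Z (n + 1) ω, by omega, by omega, rfl⟩
      · rintro ⟨j, hj, h1, h2⟩; omega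
    have hind : IndepFun (∑ i ∈ Finset.Icc 1 n, Z i) (Z (n + 1)) P :=
      hindep.indepFun_finsetSum_of_notMem hmeas (by simp)
    have happ : ∀ (c : ℕ), {ω | ∑ i ∈ Finset.Icc 1 n, Z i ω = c}
        = (∑ i ∈ Finset.Icc 1 n, Z i) ⁻¹' {c} := by
      intro c; ext ω; simp [Finset.sum_apply]
    have hZpre : ∀ (c : ℕ), {ω | Z (n + 1) ω = c} = Z (n + 1) ⁻¹' {c} := fun c => rfl
    have hterm : ∀ j : ℕ,
        P ({ω | ∑ i ∈ Finset.Icc 1 n, Z i ω = k - j} ∩ {ω | Z (n + 1) ω = j})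
          = P {ω | ∑ i ∈ Finset.Icc 1 n, Z i ω = k - j} * P {ω | Z (n + 1) ω = j} := by
      intro j
      rw [happ, hZpre]
      exact (indepFun_iff_measure_inter_preimage_eq_mul.mp hind) {k - j} {j}
        (measurableSet_singleton _) (measurableSet_singleton _)
    rw [hdecomp, measure_biUnion_finset ?_ ?_]
    rotate_left
    · intro a _ b _ hab
      refine Set.disjoint_left.mpr ?_
      rintro ω ⟨_, (h1 : Z (n + 1) ω = a)⟩ ⟨_, (h2 : Z (n + 1) ω = b)⟩
      exact hab (h1 ▸ h2 ▸ rfl)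
    · intro j _
      exact (hSmeas (measurableSet_singleton _)).inter (hmeas (n + 1) (measurableSet_singleton _))
    have hval : ∀ j ∈ Finset.range (k + 1),
        P ({ω | ∑ i ∈ Finset.Icc 1 n, Z i ω = k - j} ∩ {ω | Z (n + 1) ω = j})
          = ENNReal.ofReal ((x ^ (k - j) * (1 - x ^ n)
              * ∏ i ∈ Finset.Icc (k - j + 1) (n + (k - j) - 1), (1 - x ^ i))
              * (x ^ ((n + 1) * j) * (1 - x ^ (n + 1)))) := by
      intro j hj
      have hnn : (0:ℝ) ≤ x ^ (k - j) * (1 - x ^ n)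
          * ∏ i ∈ Finset.Icc (k - j + 1) (n + (k - j) - 1), (1 - x ^ i) :=
        mul_nonneg (mul_nonneg (by positivity) (by linarith [hxle1 n])) (hfac _ _)
      rw [hterm j, ih (k - j), pmfZ P x hx0 Z hmeas hgeom (n + 1) (by omega) j,
        ← ENNReal.ofReal_mul hnn]
    rw [Finset.sum_congr rfl hval, ← ENNReal.ofReal_sum_of_nonneg (fun j _ =>
      mul_nonneg (mul_nonneg (mul_nonneg (by positivity) (by linarith [hxle1 n])) (hfac _ _))
        (mul_nonneg (by positivity) (by linarith [hxle1 (n + 1)])))]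
    congr 1
    have hre : ∀ j ∈ Finset.range (k + 1),
        (x ^ (k - j) * (1 - x ^ n)
            * ∏ i ∈ Finset.Icc (k - j + 1) (n + (k - j) - 1), (1 - x ^ i))
            * (x ^ ((n + 1) * j) * (1 - x ^ (n + 1)))
        = (x ^ k * (1 - x ^ (n + 1))) * (x ^ (n * j) * (1 - x ^ n)
            * ∏ i ∈ Finset.Icc (k - j + 1) (n + k - j - 1), (1 - x ^ i)) := by
      intro j hj
      rw [Finset.mem_range] at hj
      rw [show n + (k - j) - 1 = n + k - j - 1 by omega]
      have hpow : x ^ (k - j) * x ^ ((n + 1) * j) = x ^ k * x ^ (n * j) := by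
        rw [← pow_add, ← pow_add]
        congr 1
        rw [Nat.succ_mul]
        generalize n * j = m
        omega
      calc (x ^ (k - j) * (1 - x ^ n)
            * ∏ i ∈ Finset.Icc (k - j + 1) (n + k - j - 1), (1 - x ^ i))
            * (x ^ ((n + 1) * j) * (1 - x ^ (n + 1)))
          = (x ^ (k - j) * x ^ ((n + 1) * j)) * ((1 - x ^ n) * (1 - x ^ (n + 1))
              * ∏ i ∈ Finset.Icc (k - j + 1) (n + k - j - 1), (1 - x ^ i)) := by ring
        _ = (x ^ k * x ^ (n * j)) * ((1 - x ^ n) * (1 - x ^ (n + 1))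
              * ∏ i ∈ Finset.Icc (k - j + 1) (n + k - j - 1), (1 - x ^ i)) := by rw [hpow]
        _ = (x ^ k * (1 - x ^ (n + 1))) * (x ^ (n * j) * (1 - x ^ n)
              * ∏ i ∈ Finset.Icc (k - j + 1) (n + k - j - 1), (1 - x ^ i)) := by ring
    rw [Finset.sum_congr rfl hre, ← Finset.mul_sum, key_alg x n hn k,
      show n + 1 + k - 1 = n + k by omega]

theorem Sn_pmf_and_ratio {Ω : Type*} [MeasurableSpace Ω] (P : Measure Ω)
    [IsProbabilityMeasure P] (x : ℝ) (hx0 : 0 < x) (hx1 : x < 1)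
    (Z : ℕ → Ω → ℕ) (hmeas : ∀ i, Measurable (Z i))
    (hindep : iIndepFun Z P)
    (hgeom : ∀ i, 1 ≤ i → ∀ k : ℕ, P {ω | k ≤ Z i ω} = ENNReal.ofReal (x ^ (i * k)))
    (n : ℕ) (hn : 1 ≤ n) (k : ℕ) :
    P {ω | ∑ i ∈ Finset.Icc 1 n, Z i ω = k}
        = ENNReal.ofReal (x ^ k * (1 - x ^ n)
            * ∏ i ∈ Finset.Icc (k + 1) (n + k - 1), (1 - x ^ i))
    ∧ (P {ω | ∑ i ∈ Finset.Icc 1 n, Z i ω = k + 1}).toReal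
        / (P {ω | ∑ i ∈ Finset.Icc 1 n, Z i ω = k}).toReal
      = x * (1 - x ^ (n + k)) / (1 - x ^ (k + 1)) := by
  have hxlt1 : ∀ m : ℕ, 1 ≤ m → x ^ m < 1 := fun m hm =>
    pow_lt_one₀ hx0.le hx1 (by omega)
  have hprodpos : ∀ a b : ℕ, 1 ≤ a → (0:ℝ) < ∏ i ∈ Finset.Icc a b, (1 - x ^ i) := by
    intro a b ha
    refine Finset.prod_pos fun i hi => ?_
    rw [Finset.mem_Icc] at hi
    have := hxlt1 i (by omega)
    linarith
  have h1 := pmfS P x hx0 hx1 Z hmeas hindep hgeom n hn k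
  have h2 := pmfS P x hx0 hx1 Z hmeas hindep hgeom n hn (k + 1)
  refine ⟨h1, ?_⟩
  rw [show n + (k + 1) - 1 = n + k by omega] at h2
  have hApos : (0:ℝ) < x ^ k * (1 - x ^ n)
      * ∏ i ∈ Finset.Icc (k + 1) (n + k - 1), (1 - x ^ i) := by
    have ha := hxlt1 n hn
    exact mul_pos (mul_pos (pow_pos hx0 _) (by linarith)) (hprodpos (k + 1) (n + k - 1) (by omega))
  have hBpos : (0:ℝ) < x ^ (k + 1) * (1 - x ^ n)
      * ∏ i ∈ Finset.Icc (k + 1 + 1) (n + k), (1 - x ^ i) := by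
    have ha := hxlt1 n hn
    exact mul_pos (mul_pos (pow_pos hx0 _) (by linarith)) (hprodpos (k + 1 + 1) (n + k) (by omega))
  rw [h1, h2, ENNReal.toReal_ofReal hBpos.le, ENNReal.toReal_ofReal hApos.le]
  have hden : (0:ℝ) < 1 - x ^ (k + 1) := by have := hxlt1 (k + 1) (by omega); linarith
  have hprodid : (1 - x ^ (k + 1)) * ∏ i ∈ Finset.Icc (k + 1 + 1) (n + k), (1 - x ^ i)
      = (1 - x ^ (n + k)) * ∏ i ∈ Finset.Icc (k + 1) (n + k - 1), (1 - x ^ i) := by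
    have e1 : Finset.Icc (k + 1) (n + k) = insert (k + 1) (Finset.Icc (k + 1 + 1) (n + k)) := by
      ext a; simp only [Finset.mem_Icc, Finset.mem_insert]; omega
    have e2 : Finset.Icc (k + 1) (n + k) = insert (n + k) (Finset.Icc (k + 1) (n + k - 1)) := by
      ext a; simp only [Finset.mem_Icc, Finset.mem_insert]; omega
    have p1 : ∏ i ∈ Finset.Icc (k + 1) (n + k), (1 - x ^ i)
        = (1 - x ^ (k + 1)) * ∏ i ∈ Finset.Icc (k + 1 + 1) (n + k), (1 - x ^ i) := by
      rw [e1, Finset.prod_insert (by simp only [Finset.mem_Icc]; omega)]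
    have p2 : ∏ i ∈ Finset.Icc (k + 1) (n + k), (1 - x ^ i)
        = (1 - x ^ (n + k)) * ∏ i ∈ Finset.Icc (k + 1) (n + k - 1), (1 - x ^ i) := by
      rw [e2, Finset.prod_insert (by simp only [Finset.mem_Icc]; omega)]
    rw [← p1, p2]
  rw [div_eq_div_iff hApos.ne' hden.ne']
  linear_combination (x ^ k * (1 - x ^ n) * x) * hprodid
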